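/- Let K ⊂ S be a monomial ideal and u a monomial in S that is a regular element on S/K. If S/K is pretty clean, then S/(K, u) is pretty clean. -/

import Mathlib

attribute [local instance] Classical.propDecidable

abbrev Mon (n : ℕ) := Fin n →₀ ℕ

def mdeg {n : ℕ} (u : Mon n) : ℕ := u.sum fun _ e => e

/-- `mcolon u v` is the exponent vector of `u : v = u / gcd(u,v)`. -/
noncomputable def mcolon {n : ℕ} (u v : Mon n) : Mon n := u - v

def IsAdmissible {n : ℕ} (L : List (Mon n)) : Prop :=
  ∀ i (hi : i < L.length), ∀ j (hj : j < i), ∃ k, ∃ hk : k < i,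
    mdeg (mcolon (L[k]'(hk.trans hi)) (L[i]'hi)) = 1 ∧
    mcolon (L[k]'(hk.trans hi)) (L[i]'hi) ≤
      mcolon (L[j]'(hj.trans hi)) (L[i]'hi)

def LinearQuotientsSet {n : ℕ} (T : Set (Mon n)) : Prop :=
  ∃ L : List (Mon n), L.Nodup ∧ IsAdmissible L ∧ {u | u ∈ L} = T

def LinearQuotients {n : ℕ} (G : Finset (Mon n)) : Prop :=
  LinearQuotientsSet (↑G : Set (Mon n))

/-- The monomial ideal of `MvPolynomial (Fin n) K` generated by the monomials with
exponent vectors in `G`. -/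
noncomputable def idealOf {n : ℕ} (K : Type*) [Field K] (G : Set (Mon n)) :
    Ideal (MvPolynomial (Fin n) K) :=
  Ideal.span ((fun u => MvPolynomial.monomial u (1 : K)) '' G)

/-- An ideal of the polynomial ring is a monomial ideal if it is generated by
monomials. -/
def IsMonomialIdeal {n : ℕ} {K : Type*} [Field K]
    (I : Ideal (MvPolynomial (Fin n) K)) : Prop :=
  ∃ G : Set (Mon n), I = idealOf K G

/-- A monomial prime ideal of the polynomial ring: an ideal generated by a subset of
the variables. -/
def IsVarIdeal {n : ℕ} {K : Type*} [Field K]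
    (P : Ideal (MvPolynomial (Fin n) K)) : Prop :=
  ∃ s : Set (Fin n), P = Ideal.span (MvPolynomial.X '' s)

/-- `S/I` is pretty clean: there is a filtration `I = I_0 ⊆ I_1 ⊆ ⋯ ⊆ I_r = S` by
monomial ideals with `I_j/I_{j-1} ≅ S/P_j` for monomial prime ideals `P_j`, such that
`i < j` and `P_i ⊆ P_j` imply `P_i = P_j`. -/
def PrettyClean {n : ℕ} {K : Type*} [Field K]
    (I : Ideal (MvPolynomial (Fin n) K)) : Prop :=
  ∃ (r : ℕ) (c : Fin (r + 1) → Ideal (MvPolynomial (Fin n) K))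
    (P : Fin r → Ideal (MvPolynomial (Fin n) K)),
    c 0 = I ∧ c (Fin.last r) = ⊤ ∧
    (∀ j : Fin (r + 1), IsMonomialIdeal (c j)) ∧
    (∀ j : Fin r, c j.castSucc ≤ c j.succ) ∧
    (∀ j : Fin r, (P j).IsPrime ∧ IsVarIdeal (P j)) ∧
    (∀ j : Fin r, Nonempty
      ((↥(c j.succ) ⧸ Submodule.comap (c j.succ).subtype (c j.castSucc)) ≃ₗ[MvPolynomial (Fin n) K]
        (MvPolynomial (Fin n) K ⧸ P j))) ∧
    (∀ i j : Fin r, i < j → P i ≤ P j → P i = P j)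

/- ===================== auxiliary lemmas ===================== -/

section AuxGeneral
variable {S : Type*} [CommRing S]

/-- From an iso `c'/c ≅ S/P` extract a generator `w`. -/
theorem exists_gen (c c' : Ideal S) (P : Ideal S) (hle : c ≤ c')
    (e : (↥c' ⧸ Submodule.comap c'.subtype c) ≃ₗ[S] (S ⧸ P)) :
    ∃ w : S, w ∈ c' ∧ c' = c ⊔ Ideal.span {w} ∧ ∀ f, f * w ∈ c ↔ f ∈ P := by
  obtain ⟨y₀, hy₀⟩ := Submodule.Quotient.mk_surjective _ (e.symm (Submodule.Quotient.mk 1))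
  refine ⟨(y₀ : S), y₀.2, ?_, ?_⟩
  · apply le_antisymm
    · intro y hy
      obtain ⟨g, hg⟩ := Submodule.Quotient.mk_surjective P (e (Submodule.Quotient.mk ⟨y, hy⟩))
      have h1 : (Submodule.Quotient.mk ⟨y, hy⟩ :
          ↥c' ⧸ Submodule.comap c'.subtype c) = Submodule.Quotient.mk (g • y₀) := by
        rw [Submodule.Quotient.mk_smul, hy₀, ← map_smul, ← Submodule.Quotient.mk_smul,
          smul_eq_mul, mul_one, hg, LinearEquiv.symm_apply_apply]
      rw [Submodule.Quotient.eq] at h1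
      have h2 : y - g * (y₀ : S) ∈ c := h1
      have : y = (y - g * y₀) + g * y₀ := by ring
      rw [this]
      exact Submodule.add_mem _ (Submodule.mem_sup_left h2)
        (Submodule.mem_sup_right (Ideal.mem_span_singleton'.2 ⟨g, rfl⟩))
    · refine sup_le hle ?_
      rw [Ideal.span_le, Set.singleton_subset_iff]
      exact y₀.2
  · intro f
    have key : e (Submodule.Quotient.mk (f • y₀)) = Submodule.Quotient.mk f := by
      rw [Submodule.Quotient.mk_smul, map_smul, hy₀, LinearEquiv.apply_symm_apply,
        ← Submodule.Quotient.mk_smul, smul_eq_mul, mul_one]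
    constructor
    · intro hf
      have h0 : (Submodule.Quotient.mk (f • y₀) :
          ↥c' ⧸ Submodule.comap c'.subtype c) = 0 := by
        rw [Submodule.Quotient.mk_eq_zero]
        exact hf
      have := key.symm.trans (by rw [h0, map_zero])
      rwa [Submodule.Quotient.mk_eq_zero] at this
    · intro hf
      have h0 : (Submodule.Quotient.mk f : S ⧸ P) = 0 := (Submodule.Quotient.mk_eq_zero _).2 hf
      rw [h0] at key
      have := e.injective (key.trans (map_zero e).symm)
      rw [Submodule.Quotient.mk_eq_zero] at this
      exact this

theorem iso_of_colon (N N' Q : Ideal S) (g : S)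
    (hN' : N' = N ⊔ Ideal.span {g}) (hcolon : ∀ f, f * g ∈ N ↔ f ∈ Q) :
    Nonempty ((↥N' ⧸ Submodule.comap N'.subtype N) ≃ₗ[S] (S ⧸ Q)) := by
  have hg : g ∈ N' := by
    rw [hN']; exact Submodule.mem_sup_right (Ideal.subset_span rfl)
  let ψ : S →ₗ[S] ↥N' :=
    { toFun := fun f => ⟨f * g, N'.mul_mem_left f hg⟩
      map_add' := fun a b => by ext; simp [add_mul]
      map_smul' := fun a b => by ext; simp [mul_assoc] }
  let φ : S →ₗ[S] (↥N' ⧸ Submodule.comap N'.subtype N) :=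
    (Submodule.comap N'.subtype N).mkQ.comp ψ
  have hker : LinearMap.ker φ = Q := by
    ext f
    simp only [φ, LinearMap.mem_ker, LinearMap.comp_apply, Submodule.mkQ_apply,
      Submodule.Quotient.mk_eq_zero, Submodule.mem_comap, Submodule.subtype_apply]
    exact hcolon f
  have hsurj : Function.Surjective φ := by
    intro x
    obtain ⟨y, rfl⟩ := Submodule.Quotient.mk_surjective _ x
    have hy : (y : S) ∈ N ⊔ Ideal.span {g} := by rw [← hN']; exact y.2
    obtain ⟨a, ha, z, hz, hyz⟩ := Submodule.mem_sup.1 hy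
    obtain ⟨f, rfl⟩ := Ideal.mem_span_singleton'.1 hz
    refine ⟨f, ?_⟩
    show Submodule.Quotient.mk (ψ f) = Submodule.Quotient.mk y
    rw [Submodule.Quotient.eq]
    show (ψ f : S) - (y : S) ∈ N
    have : (ψ f : S) - (y : S) = -a := by
      simp only [ψ, LinearMap.coe_mk, AddHom.coe_mk]
      rw [← hyz]; ring
    rw [this]
    exact neg_mem ha
  exact ⟨((Submodule.quotEquivOfEq Q (LinearMap.ker φ) hker.symm).trans
    (φ.quotKerEquivOfSurjective hsurj)).symm⟩

theorem nonempty_quot_congr {A A' B B' P P' : Ideal S} (hA : A = A') (hB : B = B')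
    (hP : P = P')
    (h : Nonempty ((↥A ⧸ Submodule.comap A.subtype B) ≃ₗ[S] S ⧸ P)) :
    Nonempty ((↥A' ⧸ Submodule.comap A'.subtype B') ≃ₗ[S] S ⧸ P') := by
  subst hA; subst hB; subst hP; exact h

section Chain
variable {C Q : ℕ → Ideal S} {W : ℕ → S} {r : ℕ} {U : S}

theorem chain_le (hmono : ∀ j, C j ≤ C (j+1)) : ∀ j k, j ≤ k → C j ≤ C k := by
  intro j k hjk
  induction k with
  | zero => rw [Nat.le_zero.1 hjk]
  | succ k ih =>
      rcases Nat.lt_or_ge j (k+1) with h | h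
      · exact le_trans (ih (Nat.lt_succ_iff.1 h)) (hmono k)
      · rw [Nat.le_antisymm hjk h]

theorem exists_level (hmono : ∀ j, C j ≤ C (j+1)) (htop : C r = ⊤) :
    ∀ j f, j ≤ r → f ∉ C j → ∃ s, j ≤ s ∧ s < r ∧ f ∉ C s ∧ f ∈ C (s+1) := by
  have H : ∀ k j f, r - j = k → j ≤ r → f ∉ C j →
      ∃ s, j ≤ s ∧ s < r ∧ f ∉ C s ∧ f ∈ C (s+1) := by
    intro k
    induction k with
    | zero =>
        intro j f hk hjr hf
        exfalso
        have : j = r := by omega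
        rw [this, htop] at hf
        exact hf Submodule.mem_top
    | succ k ih =>
        intro j f hk hjr hf
        have hjr' : j < r := by omega
        by_cases hf1 : f ∈ C (j+1)
        · exact ⟨j, le_refl j, hjr', hf, hf1⟩
        · obtain ⟨s, hs1, hs2, hs3, hs4⟩ := ih (j+1) f (by omega) (by omega) hf1
          exact ⟨s, by omega, hs2, hs3, hs4⟩
  exact fun j f hjr hf => H (r - j) j f rfl hjr hf

/-- the annihilator of any element of `C (s+1) \ C s` is contained in `Q s`. -/
theorem ann_le_Q
    (hW : ∀ j, j < r → W j ∈ C (j+1) ∧ C (j+1) = C j ⊔ Ideal.span {W j} ∧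
      ∀ f, f * W j ∈ C j ↔ f ∈ Q j)
    (hprime : ∀ j, j < r → (Q j).IsPrime)
    {s : ℕ} (hs : s < r) {f : S} (hf1 : f ∉ C s) (hf2 : f ∈ C (s+1)) :
    ∀ h, h * f ∈ C s → h ∈ Q s := by
  obtain ⟨hWmem, hCs, hcol⟩ := hW s hs
  rw [hCs] at hf2
  obtain ⟨a, ha, z, hz, hazf⟩ := Submodule.mem_sup.1 hf2
  obtain ⟨g, rfl⟩ := Ideal.mem_span_singleton'.1 hz
  have hg : g ∉ Q s := by
    intro hgQ
    apply hf1
    have : g * W s ∈ C s := (hcol g).2 hgQ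
    rw [← hazf]
    exact Submodule.add_mem _ ha this
  intro h hh
  have h1 : h * g * W s ∈ C s := by
    have he : h * g * W s = h * f - h * a := by rw [← hazf]; ring
    rw [he]
    exact Submodule.sub_mem _ hh (Ideal.mul_mem_left _ _ ha)
  have := (hcol (h * g)).1 h1
  rcases ((hprime s hs).mem_or_mem this) with h' | h'
  · exact h'
  · exact absurd h' hg

theorem witness_descent (hmono : ∀ j, C j ≤ C (j+1)) (htop : C r = ⊤)
    (hW : ∀ j, j < r → W j ∈ C (j+1) ∧ C (j+1) = C j ⊔ Ideal.span {W j} ∧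
      ∀ f, f * W j ∈ C j ↔ f ∈ Q j)
    (hprime : ∀ j, j < r → (Q j).IsPrime)
    (hpc : ∀ i j, i < j → j < r → Q i ≤ Q j → Q i = Q j) :
    ∀ j, j ≤ r → (∃ f, f ∉ C j ∧ U * f ∈ C j) → ∃ f, f ∉ C 0 ∧ U * f ∈ C 0 := by
  intro j
  induction j with
  | zero => exact fun _ h => h
  | succ j ih =>
      intro hjr ⟨f, hf, hUf⟩
      have hjr' : j < r := hjr
      obtain ⟨hWmem, hCs, hcol⟩ := hW j hjr'
      apply ih (le_of_lt hjr')
      by_cases h1 : U * f ∈ C j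
      · exact ⟨f, fun hfj => hf (hmono j hfj), h1⟩
      by_cases h2 : ∃ p ∈ Q j, p * f ∉ C j
      · obtain ⟨p, hp, hpf⟩ := h2
        refine ⟨p * f, hpf, ?_⟩
        have hUf' : U * f ∈ C j ⊔ Ideal.span {W j} := by rw [← hCs]; exact hUf
        obtain ⟨a, ha, z, hz, hazf⟩ := Submodule.mem_sup.1 hUf'
        obtain ⟨g, rfl⟩ := Ideal.mem_span_singleton'.1 hz
        have he : U * (p * f) = p * a + (g * p) * W j := by linear_combination (-p) * hazf
        rw [he]
        exact Submodule.add_mem _ (Ideal.mul_mem_left _ _ ha)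
          ((hcol (g * p)).2 (Ideal.mul_mem_left _ _ hp))
      · push_neg at h2
        obtain ⟨s, hjs, hsr, hfs, hfs1⟩ := exists_level hmono htop (j+1) f hjr hf
        have hUs : U ∈ Q s := by
          apply ann_le_Q hW hprime hsr hfs hfs1
          exact chain_le hmono (j+1) s hjs hUf
        have hQjs : Q j ≤ Q s := by
          intro p hp
          apply ann_le_Q hW hprime hsr hfs hfs1
          exact chain_le hmono j s (by omega) (h2 p hp)
        have hUj : U ∈ Q j := by
          rw [hpc j s (by omega) hsr hQjs]; exact hUs
        refine ⟨W j, ?_, ?_⟩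
        · intro hWj
          have := (hcol 1).1 (by rwa [one_mul])
          exact (hprime j hjr').ne_top (Ideal.eq_top_of_isUnit_mem _ this isUnit_one)
        · exact (hcol U).2 hUj

theorem U_not_mem_Q (hmono : ∀ j, C j ≤ C (j+1)) (htop : C r = ⊤)
    (hW : ∀ j, j < r → W j ∈ C (j+1) ∧ C (j+1) = C j ⊔ Ideal.span {W j} ∧
      ∀ f, f * W j ∈ C j ↔ f ∈ Q j)
    (hprime : ∀ j, j < r → (Q j).IsPrime)
    (hpc : ∀ i j, i < j → j < r → Q i ≤ Q j → Q i = Q j)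
    (hreg : ∀ f, U * f ∈ C 0 → f ∈ C 0) :
    ∀ j, j < r → U ∉ Q j := by
  intro j hjr hUj
  obtain ⟨hWmem, hCs, hcol⟩ := hW j hjr
  have hwit : ∃ f, f ∉ C j ∧ U * f ∈ C j := by
    refine ⟨W j, ?_, ?_⟩
    · intro hWj
      have := (hcol 1).1 (by rwa [one_mul])
      exact (hprime j hjr).ne_top (Ideal.eq_top_of_isUnit_mem _ this isUnit_one)
    · exact (hcol U).2 hUj
  obtain ⟨f, hf, hUf⟩ := witness_descent hmono htop hW hprime hpc j (le_of_lt hjr) hwit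
  exact hf (hreg f hUf)

theorem reg_level (hmono : ∀ j, C j ≤ C (j+1)) (htop : C r = ⊤)
    (hW : ∀ j, j < r → W j ∈ C (j+1) ∧ C (j+1) = C j ⊔ Ideal.span {W j} ∧
      ∀ f, f * W j ∈ C j ↔ f ∈ Q j)
    (hprime : ∀ j, j < r → (Q j).IsPrime)
    (hUQ : ∀ j, j < r → U ∉ Q j) :
    ∀ j, j ≤ r → ∀ f, U * f ∈ C j → f ∈ C j := by
  have H : ∀ k j, r - j = k → j ≤ r → ∀ f, U * f ∈ C j → f ∈ C j := by
    intro k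
    induction k with
    | zero =>
        intro j hk hjr f _
        have : j = r := by omega
        rw [this, htop]; exact Submodule.mem_top
    | succ k ih =>
        intro j hk hjr f hUf
        have hjr' : j < r := by omega
        obtain ⟨hWmem, hCs, hcol⟩ := hW j hjr'
        have hf1 : f ∈ C (j+1) := ih (j+1) (by omega) hjr' f (hmono j hUf)
        rw [hCs] at hf1
        obtain ⟨a, ha, z, hz, hazf⟩ := Submodule.mem_sup.1 hf1
        obtain ⟨g, rfl⟩ := Ideal.mem_span_singleton'.1 hz
        have h1 : (U * g) * W j ∈ C j := by
          have he : (U * g) * W j = U * f - U * a := by rw [← hazf]; ring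
          rw [he]
          exact Submodule.sub_mem _ hUf (Ideal.mul_mem_left _ _ ha)
        have h2 := (hcol (U * g)).1 h1
        have h3 : g ∈ Q j := ((hprime j hjr').mem_or_mem h2).resolve_left (hUQ j hjr')
        have h4 : g * W j ∈ C j := (hcol g).2 h3
        rw [← hazf]
        exact Submodule.add_mem _ ha h4
  exact fun j hjr f hUf => H (r - j) j rfl hjr f hUf
end Chain

/-- Lemma A: the colon of `W` modulo `C + (U)`. -/
theorem colon_mod_U {C C' Q : Ideal S} {W U : S}
    (hCs : C' = C ⊔ Ideal.span {W}) (hcol : ∀ f, f * W ∈ C ↔ f ∈ Q)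
    (hle : C ≤ C') (hreg' : ∀ f, U * f ∈ C' → f ∈ C') :
    ∀ f, f * W ∈ C ⊔ Ideal.span {U} ↔ f ∈ Q ⊔ Ideal.span {U} := by
  have hWmem : W ∈ C' := by
    rw [hCs]; exact Submodule.mem_sup_right (Ideal.subset_span rfl)
  intro f
  constructor
  · intro hf
    obtain ⟨a, ha, z, hz, hazf⟩ := Submodule.mem_sup.1 hf
    obtain ⟨b, rfl⟩ := Ideal.mem_span_singleton'.1 hz
    have hbU : U * b ∈ C' := by
      have he : U * b = f * W - a := by rw [← hazf]; ring
      rw [he]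
      exact Submodule.sub_mem _ (Ideal.mul_mem_left _ _ hWmem) (hle ha)
    have hb : b ∈ C' := hreg' b hbU
    rw [hCs] at hb
    obtain ⟨a', ha', z', hz', hazb⟩ := Submodule.mem_sup.1 hb
    obtain ⟨g, rfl⟩ := Ideal.mem_span_singleton'.1 hz'
    have h1 : (f - g * U) * W ∈ C := by
      have he : (f - g * U) * W = a + a' * U := by linear_combination -hazf - U * hazb
      rw [he]
      exact Submodule.add_mem _ ha (Ideal.mul_mem_right _ _ ha')
    have h2 : f - g * U ∈ Q := (hcol _).1 h1
    have he : f = (f - g * U) + g * U := by ring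
    rw [he]
    exact Submodule.add_mem _ (Submodule.mem_sup_left h2)
      (Submodule.mem_sup_right (Ideal.mem_span_singleton'.2 ⟨g, rfl⟩))
  · intro hf
    obtain ⟨p, hp, z, hz, hazf⟩ := Submodule.mem_sup.1 hf
    obtain ⟨s, rfl⟩ := Ideal.mem_span_singleton'.1 hz
    have he : f * W = p * W + (s * W) * U := by linear_combination W * hazf.symm
    rw [he]
    exact Submodule.add_mem _ (Submodule.mem_sup_left ((hcol p).2 hp))
      (Submodule.mem_sup_right (Ideal.mem_span_singleton'.2 ⟨s * W, rfl⟩))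

/-- The micro-step colon. -/
theorem micro_colon {C C' Q : Ideal S} {W U u1 u2 xi A1 : S}
    (hCs : C' = C ⊔ Ideal.span {W}) (hcol : ∀ f, f * W ∈ C ↔ f ∈ Q)
    (hle : C ≤ C') (hreg' : ∀ f, U * f ∈ C' → f ∈ C')
    (hQ : (Q : Ideal S).IsPrime) (hu2 : u2 ∉ Q)
    (hu1 : u1 = xi * u2) (hU : U = u2 * A1) (hA1 : A1 ∈ Ideal.span {xi}) :
    ∀ f, f * (u2 * W) ∈ C ⊔ Ideal.span {U} ⊔ Ideal.span {u1} * C' ↔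
      f ∈ Q ⊔ Ideal.span {xi} := by
  have hWmem : W ∈ C' := by
    rw [hCs]; exact Submodule.mem_sup_right (Ideal.subset_span rfl)
  intro f
  constructor
  · intro hf
    obtain ⟨y, hy, z, hz, hyzf⟩ := Submodule.mem_sup.1 hf
    obtain ⟨v, hv, hvz⟩ := Ideal.mem_span_singleton_mul.1 hz
    rw [hCs] at hv
    obtain ⟨a'', ha'', z'', hz'', hazv⟩ := Submodule.mem_sup.1 hv
    obtain ⟨g, rfl⟩ := Ideal.mem_span_singleton'.1 hz''
    have h1 : (f * u2 - g * u1) * W ∈ C ⊔ Ideal.span {U} := by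
      have he : (f * u2 - g * u1) * W = y + u1 * a'' := by
        linear_combination (-1 : S) * hyzf - hvz - u1 * hazv
      rw [he]
      exact Submodule.add_mem _ hy
        (Submodule.mem_sup_left (Ideal.mul_mem_left _ _ ha''))
    have h2 : f * u2 - g * u1 ∈ Q ⊔ Ideal.span {U} :=
      (colon_mod_U hCs hcol hle hreg' _).1 h1
    obtain ⟨p, hp, z3, hz3, h3⟩ := Submodule.mem_sup.1 h2
    obtain ⟨sₐ, rfl⟩ := Ideal.mem_span_singleton'.1 hz3
    have h4 : u2 * (f - sₐ * A1 - g * xi) ∈ Q := by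
      have he : u2 * (f - sₐ * A1 - g * xi) = p := by
        rw [hU] at h3; rw [hu1] at h3; linear_combination -h3
      rw [he]; exact hp
    have h5 : f - sₐ * A1 - g * xi ∈ Q := (hQ.mem_or_mem h4).resolve_left hu2
    obtain ⟨b, rfl⟩ := Ideal.mem_span_singleton'.1 hA1
    have he : f = (f - sₐ * (b * xi) - g * xi) + (sₐ * b + g) * xi := by ring
    rw [he]
    exact Submodule.add_mem _ (Submodule.mem_sup_left h5)
      (Submodule.mem_sup_right (Ideal.mem_span_singleton'.2 ⟨sₐ * b + g, rfl⟩))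
  · intro hf
    obtain ⟨p, hp, z, hz, hpzf⟩ := Submodule.mem_sup.1 hf
    obtain ⟨g, rfl⟩ := Ideal.mem_span_singleton'.1 hz
    have he : f * (u2 * W) = (p * u2) * W + u1 * (g * W) := by
      rw [hu1]; linear_combination (u2 * W) * hpzf.symm
    rw [he]
    refine Submodule.add_mem _ ?_ ?_
    · exact Submodule.mem_sup_left (Submodule.mem_sup_left
        ((hcol _).2 (Ideal.mul_mem_right _ _ hp)))
    · exact Submodule.mem_sup_right
        (Ideal.mem_span_singleton_mul.2 ⟨g * W, Ideal.mul_mem_left _ _ hWmem, rfl⟩)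

/-- block-step decomposition: `N_{t+1} = N_t ⊔ (u2 * W)`. -/
theorem block_step {C C' : Ideal S} {W u1 u2 xi : S}
    (hCs : C' = C ⊔ Ideal.span {W}) (hu1 : u1 = xi * u2) (U : S) :
    C ⊔ Ideal.span {U} ⊔ Ideal.span {u2} * C' =
      (C ⊔ Ideal.span {U} ⊔ Ideal.span {u1} * C') ⊔ Ideal.span {u2 * W} := by
  apply le_antisymm
  · refine sup_le (le_trans le_sup_left le_sup_left) ?_
    rw [Ideal.span_singleton_mul_le_iff]
    intro v hv
    rw [hCs] at hv
    obtain ⟨a, ha, z, hz, hazv⟩ := Submodule.mem_sup.1 hv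
    obtain ⟨g, rfl⟩ := Ideal.mem_span_singleton'.1 hz
    have he : u2 * v = u2 * a + g * (u2 * W) := by linear_combination u2 * hazv.symm
    rw [he]
    refine Submodule.add_mem _ ?_ ?_
    · exact Submodule.mem_sup_left (Submodule.mem_sup_left (Submodule.mem_sup_left
        (Ideal.mul_mem_left _ _ ha)))
    · exact Submodule.mem_sup_right (Ideal.mem_span_singleton'.2 ⟨g, rfl⟩)
  · refine sup_le (sup_le le_sup_left ?_) ?_
    · refine le_trans ?_ le_sup_right
      rw [Ideal.span_singleton_mul_le_iff]
      intro v hv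
      rw [hu1]
      have he : xi * u2 * v = u2 * (xi * v) := by ring
      rw [he]
      exact Ideal.mem_span_singleton_mul.2 ⟨xi * v, Ideal.mul_mem_left _ _ hv, rfl⟩
    · refine le_trans ?_ le_sup_right
      rw [Ideal.span_le, Set.singleton_subset_iff]
      have hWC' : W ∈ C' := by
        rw [hCs]; exact Submodule.mem_sup_right (Ideal.subset_span rfl)
      exact Ideal.mem_span_singleton_mul.2 ⟨W, hWC', rfl⟩

end AuxGeneral
/- ===================== variable ideals and monomials ===================== -/

section VarIdeals
open MvPolynomial
variable {n : ℕ} {K : Type*} [Field K]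

noncomputable def varPi (K : Type*) [Field K] (B : Set (Fin n)) :
    MvPolynomial (Fin n) K →ₐ[K] MvPolynomial (Fin n) K :=
  aeval (fun i => if i ∈ B then 0 else X i)

theorem varPi_span_eq_zero {B : Set (Fin n)} {f : MvPolynomial (Fin n) K}
    (hf : f ∈ Ideal.span (X '' B : Set (MvPolynomial (Fin n) K))) :
    varPi K B f = 0 := by
  have : Ideal.span (X '' B : Set (MvPolynomial (Fin n) K)) ≤
      RingHom.ker (varPi K B).toRingHom := by
    rw [Ideal.span_le]
    rintro _ ⟨i, hi, rfl⟩
    simp [RingHom.mem_ker, varPi, hi]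
  exact this hf

theorem sub_varPi_mem (B : Set (Fin n)) (f : MvPolynomial (Fin n) K) :
    f - varPi K B f ∈ Ideal.span (X '' B : Set (MvPolynomial (Fin n) K)) := by
  induction f using MvPolynomial.induction_on with
  | C a => simp [varPi]
  | add p q hp hq =>
      have : p + q - varPi K B (p + q) = (p - varPi K B p) + (q - varPi K B q) := by
        rw [map_add]; ring
      rw [this]; exact Ideal.add_mem _ hp hq
  | mul_X p i hp =>
      by_cases hi : i ∈ B
      · have hXi : (X i : MvPolynomial (Fin n) K) ∈ Ideal.span (X '' B) :=
          Ideal.subset_span ⟨i, hi, rfl⟩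
        have : p * X i - varPi K B (p * X i) = p * X i - 0 := by
          rw [map_mul]; simp [varPi, hi]
        rw [this, sub_zero]
        exact Ideal.mul_mem_left _ _ hXi
      · have : p * X i - varPi K B (p * X i) = (p - varPi K B p) * X i := by
          rw [map_mul]; simp only [varPi, aeval_X, if_neg hi]; ring
        rw [this]
        exact Ideal.mul_mem_right _ _ hp

theorem mem_span_vars_iff {B : Set (Fin n)} {f : MvPolynomial (Fin n) K} :
    f ∈ Ideal.span (X '' B : Set (MvPolynomial (Fin n) K)) ↔ varPi K B f = 0 := by
  constructor
  · exact varPi_span_eq_zero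
  · intro h
    have := sub_varPi_mem B f
    rwa [h, sub_zero] at this

theorem isPrime_span_vars (B : Set (Fin n)) :
    (Ideal.span (X '' B : Set (MvPolynomial (Fin n) K))).IsPrime := by
  constructor
  · intro h
    have : (1 : MvPolynomial (Fin n) K) ∈ Ideal.span (X '' B) := h ▸ Submodule.mem_top
    rw [mem_span_vars_iff] at this
    simp at this
  · intro f g hfg
    rw [mem_span_vars_iff, map_mul] at hfg
    rcases mul_eq_zero.1 hfg with h | h
    · exact Or.inl (mem_span_vars_iff.2 h)
    · exact Or.inr (mem_span_vars_iff.2 h)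

theorem X_mem_span_vars_iff {B : Set (Fin n)} {a : Fin n} :
    (X a : MvPolynomial (Fin n) K) ∈ Ideal.span (X '' B) ↔ a ∈ B := by
  constructor
  · intro h
    by_contra ha
    rw [mem_span_vars_iff] at h
    simp only [varPi, aeval_X, if_neg ha] at h
    exact X_ne_zero a h
  · intro h; exact Ideal.subset_span ⟨a, h, rfl⟩

theorem span_vars_le_iff {A B : Set (Fin n)} :
    Ideal.span (X '' A : Set (MvPolynomial (Fin n) K)) ≤ Ideal.span (X '' B) ↔ A ⊆ B := by
  constructor
  · intro h a ha
    exact X_mem_span_vars_iff.1 (h (X_mem_span_vars_iff (K := K).2 ha))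
  · intro h
    rw [Ideal.span_le]
    rintro _ ⟨i, hi, rfl⟩
    exact Ideal.subset_span ⟨i, h hi, rfl⟩

theorem monomial_mem_span_vars {B : Set (Fin n)} {ν : Fin n →₀ ℕ} :
    (monomial ν (1 : K)) ∈ Ideal.span (X '' B) ↔ ∃ i ∈ B, ν i ≠ 0 := by
  constructor
  · intro h
    by_contra hc
    push_neg at hc
    rw [mem_span_vars_iff] at h
    simp only [varPi] at h
    rw [aeval_monomial] at h
    have : (ν.prod fun i k => (if i ∈ B then (0 : MvPolynomial (Fin n) K) else X i) ^ k)
        = monomial ν 1 := by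
      rw [Finsupp.prod]
      have : ∀ i ∈ ν.support,
          (if i ∈ B then (0 : MvPolynomial (Fin n) K) else X i) ^ ν i = X i ^ ν i := by
        intro i hi
        have : i ∉ B := fun hiB => (Finsupp.mem_support_iff.1 hi) (hc i hiB)
        rw [if_neg this]
      rw [Finset.prod_congr rfl this]
      rw [MvPolynomial.monomial_eq, C_1, one_mul]
      rfl
    rw [this] at h
    simp only [map_one, one_mul] at h
    exact (by simpa using congrArg (coeff ν) h : (1:K) = 0) |> (one_ne_zero)
  · rintro ⟨i, hiB, hνi⟩
    have hdec : ν = Finsupp.single i 1 + (ν - Finsupp.single i 1) := by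
      ext j
      by_cases hj : j = i
      · subst hj; simp; omega
      · simp [Finsupp.single_apply, Ne.symm hj]
    have hX : (X i : MvPolynomial (Fin n) K) = monomial (Finsupp.single i 1) 1 := rfl
    have : (monomial ν (1:K)) = X i * monomial (ν - Finsupp.single i 1) 1 := by
      rw [hX, monomial_mul, one_mul, ← hdec]
    rw [this]
    exact Ideal.mul_mem_right _ _ (Ideal.subset_span ⟨i, hiB, rfl⟩)

end VarIdeals

/- ===================== lists of variables of a monomial ===================== -/

noncomputable def varList {n : ℕ} (m : Mon n) : List (Fin n) :=
  (Finsupp.toMultiset m).toList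

theorem length_varList {n : ℕ} (m : Mon n) : (varList m).length = mdeg m := by
  rw [varList, Multiset.length_toList, Finsupp.card_toMultiset]; rfl

theorem mem_varList {n : ℕ} {m : Mon n} {i : Fin n} (h : i ∈ varList m) : m i ≠ 0 := by
  rw [varList, Multiset.mem_toList] at h
  intro h0
  rw [← Finsupp.count_toMultiset m i] at h0
  rw [Multiset.count_eq_zero] at h0
  exact h0 h

theorem sum_map_single_toList {n : ℕ} (s : Multiset (Fin n)) :
    ((s.toList).map (fun i => Finsupp.single i (1:ℕ))).sum = Multiset.toFinsupp s := by
  have H : ∀ l : List (Fin n), ((l.map (fun i => Finsupp.single i (1:ℕ))).sum)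
      = Multiset.toFinsupp (↑l : Multiset (Fin n)) := by
    intro l
    induction l with
    | nil => simp
    | cons a l ih =>
        simp only [List.map_cons, List.sum_cons, ih]
        ext j
        simp [Multiset.toFinsupp_apply, Finsupp.single_apply, List.count_cons]
        by_cases hj : a = j <;> simp [hj, eq_comm] <;> omega
  rw [H s.toList, Multiset.coe_toList]

noncomputable def vt {n : ℕ} (m : Mon n) (t : ℕ) : Mon n :=
  (((varList m).drop t).map (fun i => Finsupp.single i 1)).sum

noncomputable def htk {n : ℕ} (m : Mon n) (t : ℕ) : Mon n :=
  (((varList m).take t).map (fun i => Finsupp.single i (1:ℕ))).sum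

noncomputable def iVar {n : ℕ} (m : Mon n) (t : ℕ) (ht : t < mdeg m) : Fin n :=
  (varList m).get ⟨t, by rw [length_varList]; exact ht⟩

theorem vt_zero {n : ℕ} (m : Mon n) : vt m 0 = m := by
  rw [vt, List.drop_zero, varList, sum_map_single_toList]
  simp

theorem vt_last {n : ℕ} (m : Mon n) : vt m (mdeg m) = 0 := by
  rw [vt, ← length_varList, List.drop_length]; simp

theorem vt_succ {n : ℕ} (m : Mon n) (t : ℕ) (ht : t < mdeg m) :
    vt m t = Finsupp.single (iVar m t ht) 1 + vt m (t+1) := by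
  have hlt : t < ((varList m).map (fun i => Finsupp.single i (1:ℕ))).length := by
    rw [List.length_map, length_varList]; exact ht
  rw [vt, vt, List.map_drop, List.map_drop, List.drop_eq_getElem_cons hlt, List.sum_cons,
    List.getElem_map]
  rfl

theorem htk_add_vt {n : ℕ} (m : Mon n) (t : ℕ) : htk m t + vt m t = m := by
  rw [htk, vt, ← List.sum_append, ← List.map_append, List.take_append_drop]
  rw [varList, sum_map_single_toList]; simp

theorem htk_succ {n : ℕ} (m : Mon n) (t : ℕ) (ht : t < mdeg m) :
    htk m (t+1) = htk m t + Finsupp.single (iVar m t ht) 1 := by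
  have hlt : t < ((varList m).map (fun i => Finsupp.single i (1:ℕ))).length := by
    rw [List.length_map, length_varList]; exact ht
  rw [htk, htk, List.map_take, List.map_take, List.take_succ, List.sum_append,
    List.getElem?_eq_getElem hlt]
  simp
  rfl

theorem m_iVar_ne_zero {n : ℕ} (m : Mon n) (t : ℕ) (ht : t < mdeg m) :
    m (iVar m t ht) ≠ 0 :=
  mem_varList (List.get_mem _ _)

theorem mdeg_eq_zero {n : ℕ} {m : Mon n} (h : mdeg m = 0) : m = 0 := by
  have hc : Multiset.card (Finsupp.toMultiset m) = 0 := by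
    rw [Finsupp.card_toMultiset]; exact h
  rw [Multiset.card_eq_zero] at hc
  ext i
  have := Finsupp.count_toMultiset m i
  rw [hc] at this
  simp at this
  simp [← this]
/- ===================== monomial ideal closure properties ===================== -/
section MonIdeals
open MvPolynomial
variable {n : ℕ} {K : Type*} [Field K]

theorem isMonomialIdeal_sup {I J : Ideal (MvPolynomial (Fin n) K)}
    (hI : IsMonomialIdeal I) (hJ : IsMonomialIdeal J) : IsMonomialIdeal (I ⊔ J) := by
  obtain ⟨G, rfl⟩ := hI; obtain ⟨G', rfl⟩ := hJ
  exact ⟨G ∪ G', by simp only [idealOf]; rw [Set.image_union, Ideal.span_union]⟩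

theorem isMonomialIdeal_span_monomial (v : Mon n) :
    IsMonomialIdeal (Ideal.span {monomial v (1:K)}) :=
  ⟨{v}, by rw [idealOf, Set.image_singleton]⟩

theorem isMonomialIdeal_top : IsMonomialIdeal (⊤ : Ideal (MvPolynomial (Fin n) K)) := by
  refine ⟨{0}, ?_⟩
  rw [idealOf, Set.image_singleton]
  rw [show (monomial (0 : Mon n) (1:K)) = 1 from by simp]
  rw [Ideal.span_singleton_one]

theorem span_monomial_mul (v : Mon n) (G : Set (Mon n)) :
    Ideal.span {monomial v (1:K)} * idealOf K G = idealOf K ((fun g => v + g) '' G) := by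
  rw [idealOf, idealOf, Ideal.span_mul_span]
  congr 1
  ext f
  simp only [Set.mem_iUnion, Set.mem_singleton_iff, Set.mem_image]
  constructor
  · rintro ⟨s, hs, t, ⟨g, hg, rfl⟩, rfl⟩
    rw [hs]
    exact ⟨v + g, ⟨g, hg, rfl⟩, by beta_reduce; rw [monomial_mul, one_mul]⟩
  · rintro ⟨_, ⟨g, hg, rfl⟩, rfl⟩
    exact ⟨monomial v 1, rfl, monomial g 1, ⟨g, hg, rfl⟩, by beta_reduce; rw [monomial_mul, one_mul]⟩

theorem isMonomialIdeal_monomial_mul {I : Ideal (MvPolynomial (Fin n) K)}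
    (hI : IsMonomialIdeal I) (v : Mon n) :
    IsMonomialIdeal (Ideal.span {monomial v (1:K)} * I) := by
  obtain ⟨G, rfl⟩ := hI
  exact ⟨_, span_monomial_mul v G⟩
end MonIdeals
/- ===================== assembling the new filtration ===================== -/
section Assemble
open MvPolynomial
variable {n : ℕ} {K : Type*} [Field K]

noncomputable def NewId (Cn : ℕ → Ideal (MvPolynomial (Fin n) K)) (m : Mon n) (q t : ℕ) :
    Ideal (MvPolynomial (Fin n) K) :=
  Cn q ⊔ Ideal.span {monomial m 1} ⊔ Ideal.span {monomial (vt m t) 1} * Cn (q+1)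

noncomputable def cnew (Cn : ℕ → Ideal (MvPolynomial (Fin n) K)) (m : Mon n) (r : ℕ)
    (k : Fin (r * mdeg m + 1)) : Ideal (MvPolynomial (Fin n) K) :=
  if (k : ℕ) < r * mdeg m then NewId Cn m ((k:ℕ) / mdeg m) ((k:ℕ) % mdeg m) else ⊤

noncomputable def pnew (Pn : ℕ → Ideal (MvPolynomial (Fin n) K)) (m : Mon n) (r : ℕ)
    (k : Fin (r * mdeg m)) : Ideal (MvPolynomial (Fin n) K) :=
  if hk : (k : ℕ) % mdeg m < mdeg m then
    Pn ((k:ℕ) / mdeg m) ⊔ Ideal.span {X (iVar m ((k:ℕ) % mdeg m) hk)}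
  else ⊤

theorem assemble (K₀ : Ideal (MvPolynomial (Fin n) K)) (m : Mon n) (r : ℕ)
    (hr : 0 < r) (hd : 0 < mdeg m)
    (Cn Pn : ℕ → Ideal (MvPolynomial (Fin n) K)) (Wn : ℕ → MvPolynomial (Fin n) K)
    (sn : ℕ → Set (Fin n))
    (hC0 : Cn 0 = K₀) (htop : Cn r = ⊤)
    (hmono : ∀ j, Cn j ≤ Cn (j+1))
    (hmon : ∀ j, IsMonomialIdeal (Cn j))
    (hW : ∀ j, j < r → Wn j ∈ Cn (j+1) ∧ Cn (j+1) = Cn j ⊔ Ideal.span {Wn j} ∧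
      ∀ f, f * Wn j ∈ Cn j ↔ f ∈ Pn j)
    (hsn : ∀ j, j < r → Pn j = Ideal.span (X '' sn j))
    (hprime : ∀ j, j < r → (Pn j).IsPrime)
    (hpc : ∀ i j, i < j → j < r → Pn i ≤ Pn j → Pn i = Pn j)
    (hreg : ∀ f, monomial m (1 : K) * f ∈ Cn 0 → f ∈ Cn 0) :
    PrettyClean (K₀ ⊔ Ideal.span {monomial m (1:K)}) := by
  have hUQ : ∀ j, j < r → monomial m (1:K) ∉ Pn j :=
    U_not_mem_Q hmono htop hW hprime hpc hreg
  have hregj : ∀ j, j ≤ r → ∀ f, monomial m (1:K) * f ∈ Cn j → f ∈ Cn j :=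
    reg_level hmono htop hW hprime hUQ
  have hufact : ∀ t, monomial m (1:K) = monomial (vt m t) 1 * monomial (htk m t) 1 := by
    intro t
    rw [monomial_mul, one_mul, add_comm, htk_add_vt]
  have hustep : ∀ t (htl : t < mdeg m),
      monomial (vt m t) (1:K) = X (iVar m t htl) * monomial (vt m (t+1)) 1 := by
    intro t htl
    rw [vt_succ m t htl, monomial_single_add, pow_one]
  have hAstep : ∀ t (htl : t < mdeg m),
      monomial (htk m (t+1)) (1:K) ∈ Ideal.span {X (iVar m t htl)} := by
    intro t htl
    refine Ideal.mem_span_singleton'.2 ⟨monomial (htk m t) 1, ?_⟩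
    rw [htk_succ m t htl,
      show htk m t + Finsupp.single (iVar m t htl) 1
        = Finsupp.single (iVar m t htl) 1 + htk m t from add_comm _ _,
      monomial_single_add, pow_one, mul_comm]
  have huNotP : ∀ (t q : ℕ), q < r → monomial (vt m t) (1:K) ∉ Pn q := by
    intro t q hq hmem
    exact hUQ q hq (by rw [hufact t]; exact Ideal.mul_mem_right _ _ hmem)
  have hdisj : ∀ q, q < r → ∀ x, x ∈ sn q → m x = 0 := by
    intro q hq x hx
    by_contra hmx
    exact hUQ q hq (by rw [hsn q hq]; exact monomial_mem_span_vars.2 ⟨x, hx, hmx⟩)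
  have hdiv : ∀ kk : ℕ, kk < r * mdeg m → kk / mdeg m < r := by
    intro kk hk
    exact (Nat.div_lt_iff_lt_mul hd).2 hk
  have hmod : ∀ kk : ℕ, kk % mdeg m < mdeg m := fun kk => Nat.mod_lt _ hd
  have hT0 : ∀ q, NewId Cn m q 0 = Cn q ⊔ Ideal.span {monomial m (1:K)} := by
    intro q
    rw [NewId, vt_zero]
    apply le_antisymm
    · exact sup_le le_rfl (le_trans Ideal.mul_le_left le_sup_right)
    · exact le_sup_left
  have hTd : ∀ q, NewId Cn m q (mdeg m) = Cn (q+1) ⊔ Ideal.span {monomial m (1:K)} := by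
    intro q
    rw [NewId, vt_last]
    rw [show (monomial (0 : Mon n) (1:K)) = 1 from by simp, Ideal.span_singleton_one,
      Ideal.top_mul]
    apply le_antisymm
    · refine sup_le (sup_le ?_ le_sup_right) le_sup_left
      exact le_trans (hmono q) le_sup_left
    · exact sup_le le_sup_right (le_trans le_sup_right le_sup_left)
  have hblockEq : ∀ q t, q < r → t < mdeg m →
      NewId Cn m q (t+1) = NewId Cn m q t ⊔
        Ideal.span {monomial (vt m (t+1)) (1:K) * Wn q} := by
    intro q t hq htl
    exact block_step (hW q hq).2.1 (hustep t htl) (monomial m (1:K))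
  have hmicro : ∀ (q t : ℕ) (hq : q < r) (htl : t < mdeg m),
      ∀ f, f * (monomial (vt m (t+1)) (1:K) * Wn q) ∈ NewId Cn m q t ↔
        f ∈ Pn q ⊔ Ideal.span {X (iVar m t htl)} := by
    intro q t hq htl
    exact micro_colon (hW q hq).2.1 (hW q hq).2.2 (hmono q)
      (fun f => hregj (q+1) hq f) (hprime q hq) (huNotP (t+1) q hq)
      (hustep t htl) (hufact (t+1)) (hAstep t htl)
  have hcval : ∀ (k : Fin (r * mdeg m + 1)), (k : ℕ) < r * mdeg m →
      cnew Cn m r k = NewId Cn m ((k:ℕ) / mdeg m) ((k:ℕ) % mdeg m) := by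
    intro k hk
    rw [cnew, if_pos hk]
  have hcsucc : ∀ (kk : ℕ) (hk : kk < r * mdeg m) (hk1 : kk + 1 < r * mdeg m + 1),
      cnew Cn m r ⟨kk + 1, hk1⟩ = NewId Cn m (kk / mdeg m) (kk % mdeg m + 1) := by
    intro kk hk hk1
    have hdm := Nat.div_add_mod kk (mdeg m)
    by_cases hlast : kk % mdeg m + 1 < mdeg m
    · have e1 : kk + 1 = mdeg m * (kk / mdeg m) + (kk % mdeg m + 1) := by omega
      have h1 : kk + 1 < r * mdeg m := by
        have h2 : mdeg m * (kk / mdeg m + 1) ≤ mdeg m * r :=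
          Nat.mul_le_mul_left _ (hdiv kk hk)
        have h3 : mdeg m * (kk / mdeg m + 1) = mdeg m * (kk / mdeg m) + mdeg m :=
          Nat.mul_succ _ _
        have h4 : mdeg m * r = r * mdeg m := Nat.mul_comm _ _
        omega
      have hq' : (kk+1) / mdeg m = kk / mdeg m := by
        rw [e1, Nat.mul_add_div hd, Nat.div_eq_of_lt hlast, add_zero]
      have hm' : (kk+1) % mdeg m = kk % mdeg m + 1 := by
        rw [e1, Nat.mul_add_mod, Nat.mod_eq_of_lt hlast]
      have hv : ((⟨kk + 1, hk1⟩ : Fin (r * mdeg m + 1)) : ℕ) = kk + 1 := rfl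
      rw [cnew, hv, if_pos h1, hq', hm']
    · have hte : kk % mdeg m + 1 = mdeg m := by have := hmod kk; omega
      have e1 : kk + 1 = mdeg m * (kk / mdeg m + 1) := by
        rw [Nat.mul_succ]; omega
      have hq' : (kk+1) / mdeg m = kk / mdeg m + 1 := by
        rw [e1, Nat.mul_div_cancel_left _ hd]
      have hm' : (kk+1) % mdeg m = 0 := by
        rw [e1, Nat.mul_mod_right]
      have hv : ((⟨kk + 1, hk1⟩ : Fin (r * mdeg m + 1)) : ℕ) = kk + 1 := rfl
      by_cases h1 : kk + 1 < r * mdeg m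
      · rw [cnew, hv, if_pos h1, hq', hm', hT0, hte, hTd]
      · have hRd : NewId Cn m (kk / mdeg m) (kk % mdeg m + 1) = ⊤ := by
          have hqr : kk / mdeg m + 1 = r := by
            have h5 : kk + 1 = r * mdeg m := by omega
            have h6 : mdeg m * (kk / mdeg m + 1) = mdeg m * r := by
              rw [← e1, h5, Nat.mul_comm]
            exact Nat.eq_of_mul_eq_mul_left hd h6
          rw [hte, hTd, hqr, htop, top_sup_eq]
        rw [cnew, hv, if_neg h1, hRd]
  have hcastF : ∀ j : Fin (r * mdeg m),
      cnew Cn m r j.castSucc = NewId Cn m ((j:ℕ) / mdeg m) ((j:ℕ) % mdeg m) := by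
    intro j
    have hv : ((j.castSucc : Fin (r * mdeg m + 1)) : ℕ) = (j : ℕ) := Fin.coe_castSucc j
    rw [cnew, hv, if_pos j.2]
  have hcsuccF : ∀ j : Fin (r * mdeg m),
      cnew Cn m r j.succ = NewId Cn m ((j:ℕ) / mdeg m) ((j:ℕ) % mdeg m + 1) := by
    intro j
    have he : j.succ = (⟨(j : ℕ) + 1, by omega⟩ : Fin (r * mdeg m + 1)) := by
      ext; simp
    rw [he]
    exact hcsucc (j : ℕ) j.2 _
  have hrep : ∀ jj : Fin (r * mdeg m), pnew Pn m r jj =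
      Ideal.span (X '' (sn ((jj:ℕ) / mdeg m) ∪ {iVar m ((jj:ℕ) % mdeg m) (hmod _)})) := by
    intro jj
    rw [pnew, dif_pos (hmod (jj:ℕ)), hsn _ (hdiv _ jj.2),
      Set.image_union, Set.image_singleton, Ideal.span_union]
  have hpj : ∀ jj : Fin (r * mdeg m), pnew Pn m r jj =
      Pn ((jj:ℕ) / mdeg m) ⊔ Ideal.span {X (iVar m ((jj:ℕ) % mdeg m) (hmod _))} := by
    intro jj
    rw [pnew, dif_pos (hmod (jj:ℕ))]
  refine ⟨r * mdeg m, cnew Cn m r, pnew Pn m r, ?_, ?_, ?_, ?_, ?_, ?_, ?_⟩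
  · -- c 0 = K₀ ⊔ (U)
    have hz : ((0 : Fin (r * mdeg m + 1)) : ℕ) = 0 := rfl
    rw [hcval 0 (by rw [hz]; exact Nat.mul_pos hr hd), hz, Nat.zero_div, Nat.zero_mod,
      hT0, hC0]
  · -- c last = ⊤
    rw [cnew, if_neg (by simp)]
  · -- monomial ideals
    intro k
    by_cases hk : (k : ℕ) < r * mdeg m
    · rw [hcval k hk, NewId]
      exact isMonomialIdeal_sup
        (isMonomialIdeal_sup (hmon _) (isMonomialIdeal_span_monomial m))
        (isMonomialIdeal_monomial_mul (hmon _) _)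
    · rw [cnew, if_neg hk]
      exact isMonomialIdeal_top
  · -- chain increasing
    intro j
    rw [hcastF j, hcsuccF j]
    rw [hblockEq _ _ (hdiv _ j.2) (hmod _)]
    exact le_sup_left
  · -- primes and var ideals
    intro j
    constructor
    · rw [hrep j]
      exact isPrime_span_vars _
    · exact ⟨_, hrep j⟩
  · -- isomorphisms
    intro j
    exact nonempty_quot_congr (hcsuccF j).symm (hcastF j).symm (hpj j).symm
      (iso_of_colon _ _ _ _ (hblockEq _ _ (hdiv _ j.2) (hmod _))
        (hmicro _ _ (hdiv _ j.2) (hmod _)))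
  · -- pretty clean ordering
    intro i j hij hle
    rw [hrep i, hrep j] at hle ⊢
    have hss := span_vars_le_iff.1 hle
    have hqle : (i:ℕ) / mdeg m ≤ (j:ℕ) / mdeg m :=
      Nat.div_le_div_right (le_of_lt (Fin.lt_iff_val_lt_val.1 hij))
    have hai : iVar m ((i:ℕ) % mdeg m) (hmod _) = iVar m ((j:ℕ) % mdeg m) (hmod _) := by
      have h1 := hss (Set.mem_union_right _ rfl)
      rcases h1 with h1 | h1
      · exact absurd (hdisj _ (hdiv _ j.2) _ h1) (m_iVar_ne_zero m _ (hmod _))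
      · exact h1
    have hs12 : sn ((i:ℕ) / mdeg m) ⊆ sn ((j:ℕ) / mdeg m) := by
      intro x hx
      have h2 := hss (Set.mem_union_left _ hx)
      rcases h2 with h2 | h2
      · exact h2
      · exfalso
        rw [Set.mem_singleton_iff] at h2
        apply m_iVar_ne_zero m ((j:ℕ) % mdeg m) (hmod _)
        rw [← h2]
        exact hdisj _ (hdiv _ i.2) _ hx
    rcases eq_or_lt_of_le hqle with heq | hlt
    · rw [heq, hai]
    · have hP := hpc _ _ hlt (hdiv _ j.2) (by
        rw [hsn _ (hdiv _ i.2), hsn _ (hdiv _ j.2)]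
        exact span_vars_le_iff.2 hs12)
      have hs21 : sn ((j:ℕ) / mdeg m) ⊆ sn ((i:ℕ) / mdeg m) := by
        have hsle : Ideal.span (X '' sn ((j:ℕ) / mdeg m) : Set (MvPolynomial (Fin n) K))
            ≤ Ideal.span (X '' sn ((i:ℕ) / mdeg m)) := by
          rw [← hsn _ (hdiv _ i.2), ← hsn _ (hdiv _ j.2)]
          exact le_of_eq hP.symm
        exact span_vars_le_iff.1 hsle
      have hseq : sn ((i:ℕ) / mdeg m) = sn ((j:ℕ) / mdeg m) :=
        Set.Subset.antisymm hs12 hs21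
      rw [hseq, hai]
end Assemble
/-- If `K₀ ⊆ S` is a monomial ideal, `u` a monomial which is regular on `S/K₀`, and
`S/K₀` is pretty clean, then `S/(K₀, u)` is pretty clean. -/
theorem prettyClean_add_regular_monomial {n : ℕ} {K : Type*} [Field K]
    (K₀ : Ideal (MvPolynomial (Fin n) K)) (hK : IsMonomialIdeal K₀) (m : Mon n)
    (hreg : ∀ f : MvPolynomial (Fin n) K,
      MvPolynomial.monomial m (1 : K) * f ∈ K₀ → f ∈ K₀)
    (h : PrettyClean K₀) :
    PrettyClean (K₀ ⊔ Ideal.span {MvPolynomial.monomial m (1 : K)}) := by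
  classical
  obtain ⟨r, c, P, hc0, hctop, hmonF, hadjF, hPPF, hisoF, hpcF⟩ := h
  by_cases hrd : r = 0 ∨ mdeg m = 0
  · -- degenerate case : the new ideal is the unit ideal
    have htopI : K₀ ⊔ Ideal.span {MvPolynomial.monomial m (1 : K)} = ⊤ := by
      rcases hrd with hr | hdm
      · subst hr
        have hK0top : K₀ = ⊤ := by
          rw [← hc0, show (0 : Fin 1) = Fin.last 0 from rfl, hctop]
        rw [hK0top, top_sup_eq]
      · have hm0 : m = 0 := mdeg_eq_zero hdm
        subst hm0
        rw [show (MvPolynomial.monomial (0 : Mon n) (1 : K)) = 1 from by simp,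
          Ideal.span_singleton_one, sup_top_eq]
    rw [htopI]
    exact ⟨0, fun _ => ⊤, fun j => j.elim0, rfl, rfl, fun _ => isMonomialIdeal_top,
      fun j => j.elim0, fun j => j.elim0, fun j => j.elim0, fun i => i.elim0⟩
  · push_neg at hrd
    obtain ⟨hr0, hd0⟩ := hrd
    have hr : 0 < r := Nat.pos_of_ne_zero hr0
    have hd : 0 < mdeg m := Nat.pos_of_ne_zero hd0
    choose W hWmem hWspan hWcol using
      fun j : Fin r => exists_gen (c j.castSucc) (c j.succ) (P j) (hadjF j) (hisoF j).some
    choose sP hsP using fun j : Fin r => (hPPF j).2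
    -- ℕ-indexed data
    set Cn : ℕ → Ideal (MvPolynomial (Fin n) K) :=
      fun j => c ⟨min j r, by omega⟩ with hCn
    set Pn : ℕ → Ideal (MvPolynomial (Fin n) K) :=
      fun j => if hj : j < r then P ⟨j, hj⟩ else ⊥ with hPn
    set Wn : ℕ → MvPolynomial (Fin n) K :=
      fun j => if hj : j < r then W ⟨j, hj⟩ else 0 with hWn
    set sn : ℕ → Set (Fin n) :=
      fun j => if hj : j < r then sP ⟨j, hj⟩ else ∅ with hsnn
    have hCle : ∀ (j : ℕ) (hj : j ≤ r), Cn j = c ⟨j, by omega⟩ := by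
      intro j hj
      show c ⟨min j r, _⟩ = c ⟨j, _⟩
      exact congrArg c (Fin.ext (by simp only []; omega))
    have hCn0 : Cn 0 = K₀ := by
      rw [hCle 0 (by omega), ← hc0]
      congr 1
    have hCtop : Cn r = ⊤ := by
      rw [hCle r le_rfl, ← hctop]
      congr 1
    have hCmono : ∀ j, Cn j ≤ Cn (j+1) := by
      intro j
      by_cases hj : j < r
      · have e1 : Cn j = c (Fin.castSucc ⟨j, hj⟩) := by
          rw [hCle j (by omega)]
          congr 1
        have e2 : Cn (j+1) = c (Fin.succ ⟨j, hj⟩) := by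
          rw [hCle (j+1) (by omega)]
          congr 1
        rw [e1, e2]
        exact hadjF ⟨j, hj⟩
      · have e3 : Cn j = Cn (j+1) := by
          show c ⟨min j r, _⟩ = c ⟨min (j+1) r, _⟩
          exact congrArg c (Fin.ext (by simp only []; omega))
        rw [e3]
    have hCmon : ∀ j, IsMonomialIdeal (Cn j) := fun j => hmonF _
    have hWdat : ∀ j, j < r → Wn j ∈ Cn (j+1) ∧ Cn (j+1) = Cn j ⊔ Ideal.span {Wn j} ∧
        ∀ f, f * Wn j ∈ Cn j ↔ f ∈ Pn j := by
      intro j hj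
      have e1 : Cn j = c (Fin.castSucc ⟨j, hj⟩) := by
        rw [hCle j (by omega)]; congr 1
      have e2 : Cn (j+1) = c (Fin.succ ⟨j, hj⟩) := by
        rw [hCle (j+1) (by omega)]; congr 1
      have eW : Wn j = W ⟨j, hj⟩ := by rw [hWn]; simp [hj]
      have eP : Pn j = P ⟨j, hj⟩ := by rw [hPn]; simp [hj]
      refine ⟨?_, ?_, ?_⟩
      · rw [e2, eW]; exact hWmem ⟨j, hj⟩
      · rw [e1, e2, eW]; exact hWspan ⟨j, hj⟩
      · intro f; rw [e1, eW, eP]; exact hWcol ⟨j, hj⟩ f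
    have hsnd : ∀ j, j < r → Pn j = Ideal.span (MvPolynomial.X '' sn j) := by
      intro j hj
      have eP : Pn j = P ⟨j, hj⟩ := by rw [hPn]; simp [hj]
      have es : sn j = sP ⟨j, hj⟩ := by rw [hsnn]; simp [hj]
      rw [eP, es]; exact hsP ⟨j, hj⟩
    have hprimed : ∀ j, j < r → (Pn j).IsPrime := by
      intro j hj
      have eP : Pn j = P ⟨j, hj⟩ := by rw [hPn]; simp [hj]
      rw [eP]; exact (hPPF ⟨j, hj⟩).1
    have hpcd : ∀ i j, i < j → j < r → Pn i ≤ Pn j → Pn i = Pn j := by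
      intro i j hij hjr hle
      have hir : i < r := by omega
      have ei : Pn i = P ⟨i, hir⟩ := by rw [hPn]; simp [hir]
      have ej : Pn j = P ⟨j, hjr⟩ := by rw [hPn]; simp [hjr]
      rw [ei, ej]
      rw [ei, ej] at hle
      exact hpcF ⟨i, hir⟩ ⟨j, hjr⟩ (by exact hij) hle
    have hregd : ∀ f, MvPolynomial.monomial m (1 : K) * f ∈ Cn 0 → f ∈ Cn 0 := by
      intro f hf
      rw [hCn0] at hf ⊢
      exact hreg f hf
    exact assemble K₀ m r hr hd Cn Pn Wn sn hCn0 hCtop hCmono hCmon hWdat hsnd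
      hprimed hpcd hregd
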